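/- The Zariski presentation is subcanonical (sheaf condition for the ring): let R be a commutative ring and let f : Fin n → R generate the unit ideal. Suppose given x : ∀ i, Localization.Away (f i) such that for all i, j : Fin n, the images of x i and x j in Localization.Away (f i * f j) (under the canonical maps induced by localizing further) coincide. Then there exists a unique a : R whose image under the localization map R → Localization.Away (f i) equals x i for every i. -/
import Mathlib

open IsLocalization

lemma aux_inj {R : Type*} [CommRing R] (a : R) :
    Function.Injective
      (IsLocalization.Away.awayToAwayRight (S := Localization.Away a)
        (P := Localization.Away (a * a)) a a) := by
  have hu : IsUnit (algebraMap R (Localization.Away a) (a * a)) := by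
    simpa [map_mul] using (IsLocalization.Away.algebraMap_isUnit
      (S := Localization.Away a) a).mul (IsLocalization.Away.algebraMap_isUnit a)
  set g := IsLocalization.Away.lift (S := Localization.Away (a * a))
    (g := algebraMap R (Localization.Away a)) (a * a) hu with hg
  have : g.comp (IsLocalization.Away.awayToAwayRight (S := Localization.Away a)
      (P := Localization.Away (a * a)) a a) = RingHom.id _ := by
    apply IsLocalization.ringHom_ext (Submonoid.powers a)
    ext r
    simp [g, IsLocalization.Away.awayToAwayRight_eq (S := Localization.Away a)
      (P := Localization.Away (a * a)) a a r]
  intro u v huv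
  have h1 : ∀ w, g ((IsLocalization.Away.awayToAwayRight (S := Localization.Away a)
      (P := Localization.Away (a * a)) a a) w) = w := fun w ↦ DFunLike.congr_fun this w
  rw [← h1 u, huv, h1 v]

lemma aux_cast {R : Type*} [CommRing R] {a b : R} (h : a = b)
    (u : Localization.Away a) (v : Localization.Away b)
    (huv : IsLocalization.Away.awayToAwayRight (P := Localization.Away (a * b)) a b u =
      IsLocalization.Away.awayToAwayLeft (P := Localization.Away (a * b)) b a v) :
    h ▸ u = v := by
  subst h
  have : IsLocalization.Away.awayToAwayRight (S := Localization.Away a)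
      (P := Localization.Away (a * a)) a a v =
      IsLocalization.Away.awayToAwayLeft (S := Localization.Away a)
      (P := Localization.Away (a * a)) a a v := rfl
  exact aux_inj a (huv.trans this.symm)

/-- **The Zariski presentation is subcanonical.** Given `f : Fin n → R`
generating the unit ideal and elements `x i : Localization.Away (f i)` whose images
in `Localization.Away (f i * f j)` agree, there is a unique `a : R` restricting to
each `x i`. -/
theorem stmt12 {R : Type*} [CommRing R] {n : ℕ} (f : Fin n → R)
    (hf : Ideal.span (Set.range f) = ⊤)
    (x : ∀ i, Localization.Away (f i))
    (hx : ∀ i j : Fin n,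
      IsLocalization.Away.awayToAwayRight (P := Localization.Away (f i * f j))
          (f i) (f j) (x i) =
        IsLocalization.Away.awayToAwayLeft (P := Localization.Away (f i * f j))
          (f j) (f i) (x j)) :
    ∃! a : R, ∀ i, algebraMap R (Localization.Away (f i)) a = x i := by
  -- define the family indexed by the range
  have key : ∀ i j : Fin n, ∀ h : f i = f j, h ▸ x i = x j := fun i j h ↦
    aux_cast h (x i) (x j) (hx i j)
  set g : ∀ a : Set.range f, Localization.Away a.1 :=
    fun a ↦ a.2.choose_spec ▸ x a.2.choose with hgdef
  have hg : ∀ i : Fin n, ∀ h : f i ∈ Set.range f, g ⟨f i, h⟩ = x i := by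
    intro i h
    exact key h.choose i h.choose_spec
  obtain ⟨r, hr, hr'⟩ := Localization.existsUnique_algebraMap_eq_of_span_eq_top
    (Set.range f) hf g (by
      rintro ⟨a, ia, rfl⟩ ⟨b, ib, rfl⟩
      dsimp only
      rw [hg ia ⟨ia, rfl⟩, hg ib ⟨ib, rfl⟩]
      exact hx ia ib)
  refine ⟨r, fun i ↦ by rw [hr ⟨f i, ⟨i, rfl⟩⟩, hg i ⟨i, rfl⟩], fun s hs ↦ hr' s ?_⟩
  rintro ⟨a, ia, rfl⟩
  rw [hg ia ⟨ia, rfl⟩]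
  exact hs ia
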